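/- Let m ≥ 1 and let c, n be natural numbers with c + 1 ≤ n. Let A be the set of plurality scoring profiles x = (x_1,…,x_m) ∈ ℕ^m with x_1 + ⋯ + x_m = n such that there exists an index w with x_w − x_i ≥ c + 1 for every i ≠ w. Then |A| / C(n+m−1, m−1) ≥ ((n−c)/(n+1))^{m−1}. -/

import Mathlib

lemma comps_finite (m n : ℕ) : ({y : Fin m → ℕ | ∑ i, y i = n}).Finite := by
  rw [← Set.finite_coe_iff]
  have e : Sym (Fin m) n ≃ ↥{y : Fin m → ℕ | ∑ i, y i = n} :=
    (Sym.equivNatSumOfFintype (Fin m) n).trans (Equiv.subtypeEquivRight fun _ => Iff.rfl)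
  exact Finite.of_equiv _ e

lemma comps_ncard (m n : ℕ) :
    ({y : Fin m → ℕ | ∑ i, y i = n}).ncard = (m + n - 1).choose n := by
  rw [← Nat.card_coe_set_eq]
  have h : Nat.card ↑{y : Fin m → ℕ | ∑ i, y i = n}
      = Nat.card {P : Fin m → ℕ // ∑ i, P i = n} :=
    Nat.card_congr (Equiv.subtypeEquivRight fun _ => Iff.rfl)
  rw [h, ← Nat.card_congr (Sym.equivNatSumOfFintype (Fin m) n),
    Nat.card_eq_fintype_card, Sym.card_sym_eq_choose, Fintype.card_fin]

lemma good_lower (m c n' : ℕ) (hm : 1 ≤ m) :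
    ({y : Fin m → ℕ | ∑ i, y i = n'}).ncard ≤
    ({x : Fin m → ℕ | (∑ i, x i) = n' + (c + 1) ∧
        ∃ w : Fin m, ∀ i : Fin m, i ≠ w → x i + c + 1 ≤ x w}).ncard := by
  haveI : NeZero m := ⟨by omega⟩
  have hex : ∀ y : Fin m → ℕ, ∃ w, ∀ i, y i ≤ y w := fun y => Finite.exists_max y
  choose wf hwf using hex
  set f : (Fin m → ℕ) → (Fin m → ℕ) :=
    fun y => Function.update y (wf y) (y (wf y) + (c + 1)) with hf
  have hwinner : ∀ y i, i ≠ wf y → f y i + c + 1 ≤ f y (wf y) := by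
    intro y i hi
    simp only [hf, Function.update_of_ne hi, Function.update_self]
    have := hwf y i
    omega
  have hfin : ({x : Fin m → ℕ | (∑ i, x i) = n' + (c + 1) ∧
      ∃ w : Fin m, ∀ i : Fin m, i ≠ w → x i + c + 1 ≤ x w}).Finite :=
    Set.Finite.subset (comps_finite m (n' + (c + 1))) (fun x hx => hx.1)
  apply Set.ncard_le_ncard_of_injOn f ?_ ?_ hfin
  · intro y hy
    refine ⟨?_, wf y, hwinner y⟩
    simp only [hf]
    rw [Finset.sum_update_of_mem (Finset.mem_univ _),
      ← Set.mem_setOf_eq.mp hy, Finset.sum_eq_add_sum_sdiff_singleton_of_mem (Finset.mem_univ (wf y)) y]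
    ring
  · intro y _ y' _ heq
    have hww : wf y = wf y' := by
      by_contra hne
      have h1 := hwinner y (wf y') (fun h => hne h.symm)
      have h2 := hwinner y' (wf y) hne
      rw [← heq] at h2
      omega
    have hval : ∀ i, f y i = f y' i := fun i => congrFun heq i
    funext i
    by_cases hiw : i = wf y
    · subst hiw
      have := hval (wf y)
      simp only [hf, Function.update_self, hww, Function.update_self] at this ⊢
      omega
    · have := hval i
      simp only [hf, Function.update_of_ne hiw, Function.update_of_ne (hww ▸ hiw)] at this
      exact this

lemma choose_ratio_ineq (a b : ℕ) (hab : a ≤ b) : ∀ k : ℕ,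
    ((a + 1 : ℝ) / (b + 1)) ^ k * ((b + k).choose k) ≤ ((a + k).choose k)
  | 0 => by simp
  | (k + 1) => by
    have IH := choose_ratio_ineq a b hab k
    have hb1 : (0:ℝ) < (b:ℝ) + 1 := by positivity
    have hr0 : (0:ℝ) ≤ (a + 1 : ℝ) / (b + 1) := by positivity
    have h2 : ((b + k + 1) : ℕ) * ((b + k).choose k) = ((b + k + 1).choose (k + 1)) * (k + 1) := by
      simpa using Nat.add_one_mul_choose_eq (b + k) k
    have h1 : ((a + k + 1) : ℕ) * ((a + k).choose k) = ((a + k + 1).choose (k + 1)) * (k + 1) := by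
      simpa using Nat.add_one_mul_choose_eq (a + k) k
    have h2R : ((b + k + 1 : ℝ)) * ((b + k).choose k : ℝ) = ((b + k + 1).choose (k + 1) : ℝ) * (k + 1) := by
      exact_mod_cast congrArg (Nat.cast : ℕ → ℝ) h2
    have h1R : ((a + k + 1 : ℝ)) * ((a + k).choose k : ℝ) = ((a + k + 1).choose (k + 1) : ℝ) * (k + 1) := by
      exact_mod_cast congrArg (Nat.cast : ℕ → ℝ) h1
    have hk1 : (0:ℝ) < (k:ℝ) + 1 := by positivity
    rw [← mul_le_mul_iff_left₀ hk1]
    have key : ((a + 1 : ℝ) / (b + 1)) * ((b:ℝ) + k + 1) ≤ (a:ℝ) + k + 1 := by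
      rw [div_mul_eq_mul_div, div_le_iff₀ hb1]
      have : (a:ℝ) ≤ b := by exact_mod_cast hab
      nlinarith [this]
    calc ((a + 1 : ℝ) / (b + 1)) ^ (k + 1) * ((b + k + 1).choose (k + 1) : ℝ) * ((k:ℝ) + 1)
        = ((a + 1 : ℝ) / (b + 1)) ^ k * (((a + 1 : ℝ) / (b + 1)) * (((b + k + 1).choose (k + 1) : ℝ) * ((k:ℝ) + 1))) := by
          ring
      _ = ((a + 1 : ℝ) / (b + 1)) ^ k * ((b + k).choose k : ℝ) * (((a + 1 : ℝ) / (b + 1)) * ((b:ℝ) + k + 1)) := by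
          rw [← h2R]; ring
      _ ≤ ((a + k).choose k : ℝ) * ((a:ℝ) + k + 1) := by
          apply mul_le_mul IH key (by positivity) (by positivity)
      _ = ((a + k + 1).choose (k + 1) : ℝ) * ((k:ℝ) + 1) := by
          rw [← h1R]; ring

/-- For plurality with `m ≥ 1` candidates, `n` voters and coalition size `c` with
`c + 1 ≤ n`, the fraction of scoring profiles in which some candidate leads every other
candidate by at least `c + 1` is at least `((n - c)/(n + 1))^(m-1)`. -/
theorem plurality_collusion_proof_fraction (m c n : ℕ) (hm : 1 ≤ m) (hcn : c + 1 ≤ n) :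
    (((n : ℝ) - c) / ((n : ℝ) + 1)) ^ (m - 1) ≤
      (({x : Fin m → ℕ | (∑ i, x i) = n ∧
          ∃ w : Fin m, ∀ i : Fin m, i ≠ w → x i + c + 1 ≤ x w}).ncard : ℝ) /
        (Nat.choose (n + m - 1) (m - 1) : ℝ) := by
  obtain ⟨k, rfl⟩ : ∃ k, m = k + 1 := ⟨m - 1, by omega⟩
  obtain ⟨a, han⟩ : ∃ a, a + (c + 1) = n := ⟨n - c - 1, by omega⟩
  have hm1 : k + 1 - 1 = k := by omega
  have hak : a ≤ n := by omega
  have hma : k + 1 + a - 1 = a + k := by omega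
  have hCpos : 0 < (n + (k + 1) - 1).choose (k + 1 - 1) := Nat.choose_pos (by omega)
  have hC : (n + (k + 1) - 1).choose (k + 1 - 1) = (n + k).choose k := by
    congr 1
  have hcast : ((n : ℝ) - c) = (a : ℝ) + 1 := by
    have h5 : ((a : ℕ) : ℝ) + ((c : ℝ) + 1) = n := by exact_mod_cast han
    linarith
  rw [le_div_iff₀ (by exact_mod_cast hCpos)]
  have hA : (a + k).choose k ≤
      ({x : Fin (k + 1) → ℕ | (∑ i, x i) = n ∧
        ∃ w : Fin (k + 1), ∀ i : Fin (k + 1), i ≠ w → x i + c + 1 ≤ x w}).ncard := by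
    have h1 := good_lower (k + 1) c a hm
    rw [han] at h1
    have h2 := comps_ncard (k + 1) a
    have h3 : (k + 1 + a - 1).choose a = (a + k).choose k := by
      rw [hma]
      have := Nat.choose_symm (Nat.le_add_right a k)
      simpa using this.symm
    rw [h2, h3] at h1
    exact h1
  calc (((n : ℝ) - c) / ((n : ℝ) + 1)) ^ (k + 1 - 1) * ((n + (k + 1) - 1).choose (k + 1 - 1) : ℝ)
      = (((a:ℝ) + 1) / ((n : ℝ) + 1)) ^ k * ((n + k).choose k : ℝ) := by
        rw [hcast, hC, hm1]
    _ ≤ ((a + k).choose k : ℝ) := choose_ratio_ineq a n hak k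
    _ ≤ _ := by exact_mod_cast hA
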